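/- Let x and y be C¹ curves in C satisfying x'(t) + x(t) = θ(t) f(x(t)) + (1−θ(t)) T(x(t)) and y'(t) + y(t) = P_C( θ(t) f(y(t)) + (1−θ(t)) T(y(t)) + h(t) ), where h : [0,∞) → H is continuous. Then for every t ≥ 0, with v(t) = ‖x(t) − y(t)‖² and γ = 1 − α, v'(t) + 2γθ(t) v(t) ≤ 2 ‖h(t)‖ √(v(t)), and hence √(v(t)) ≤ e^{−γΘ(t)} √(v(0)) + e^{−γΘ(t)} ∫₀ᵗ e^{γΘ(s)} ‖h(s)‖ ds, where Θ(t) = ∫₀ᵗ θ(s) ds. -/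

import Mathlib

open Set
open scoped RealInnerProductSpace

lemma aux_proj_nonexpansive {H : Type*} [NormedAddCommGroup H] [InnerProductSpace ℝ H]
    {C : Set H} (hCne : C.Nonempty) (hCconv : Convex ℝ C)
    (projC : H → H)
    (hproj : ∀ z : H, projC z ∈ C ∧ ∀ y ∈ C, ‖z - projC z‖ ≤ ‖z - y‖) :
    ∀ a b : H, ‖projC a - projC b‖ ≤ ‖a - b‖ := by
  haveI : Nonempty C := hCne.to_subtype
  have hvar : ∀ z : H, ∀ w ∈ C, ⟪z - projC z, w - projC z⟫ ≤ 0 := by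
    intro z w hw
    have heq : ‖z - projC z‖ = ⨅ w : C, ‖z - w‖ := by
      refine le_antisymm (le_ciInf fun w => (hproj z).2 w w.2) ?_
      refine ciInf_le ⟨0, ?_⟩ (⟨projC z, (hproj z).1⟩ : C)
      rintro r ⟨i, rfl⟩
      exact norm_nonneg _
    exact (norm_eq_iInf_iff_real_inner_le_zero hCconv (hproj z).1).1 heq w hw
  intro a b
  have h1 : ⟪a - projC a, projC b - projC a⟫ ≤ 0 := hvar a _ (hproj b).1
  have h2 : ⟪b - projC b, projC a - projC b⟫ ≤ 0 := hvar b _ (hproj a).1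
  have key : ‖projC a - projC b‖ ^ 2 ≤ ⟪a - b, projC a - projC b⟫ := by
    have e1 : ⟪a - b, projC a - projC b⟫ =
        ⟪a - projC a, projC a - projC b⟫ - ⟪b - projC b, projC a - projC b⟫
          + ⟪projC a - projC b, projC a - projC b⟫ := by
      rw [← inner_sub_left, ← inner_add_left]; congr 1; abel
    have e2 : ⟪a - projC a, projC a - projC b⟫ =
        -⟪a - projC a, projC b - projC a⟫ := by
      rw [← inner_neg_right, neg_sub]
    rw [e1, e2, real_inner_self_eq_norm_sq]
    linarith
  have hcs : ⟪a - b, projC a - projC b⟫ ≤ ‖a - b‖ * ‖projC a - projC b‖ :=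
    real_inner_le_norm _ _
  rcases eq_or_lt_of_le (norm_nonneg (projC a - projC b)) with h0 | h0
  · rw [← h0]; exact norm_nonneg _
  · nlinarith

theorem stmt16 {H : Type*} [NormedAddCommGroup H] [InnerProductSpace ℝ H]
    [CompleteSpace H]
    (C : Set H) (hCne : C.Nonempty) (hCcl : IsClosed C) (hCconv : Convex ℝ C)
    (f T : H → H) (hfC : Set.MapsTo f C C) (hTC : Set.MapsTo T C C)
    (α : ℝ) (hα0 : 0 ≤ α) (hα1 : α < 1)
    (hf : ∀ x ∈ C, ∀ y ∈ C, ‖f x - f y‖ ≤ α * ‖x - y‖)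
    (hT : ∀ x ∈ C, ∀ y ∈ C, ‖T x - T y‖ ≤ ‖x - y‖)
    (θ : ℝ → ℝ) (hθc : Continuous θ) (hθ : ∀ t, 0 ≤ t → 0 < θ t ∧ θ t ≤ 1)
    -- projC is the metric projection onto C
    (projC : H → H)
    (hproj : ∀ z : H, projC z ∈ C ∧ ∀ y ∈ C, ‖z - projC z‖ ≤ ‖z - y‖)
    (h : ℝ → H) (hhc : Continuous h)
    (x x' y y' : ℝ → H)
    (hx' : ∀ t, 0 ≤ t → HasDerivAt x (x' t) t)
    (hy' : ∀ t, 0 ≤ t → HasDerivAt y (y' t) t)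
    (hxC : ∀ t, 0 ≤ t → x t ∈ C) (hyC : ∀ t, 0 ≤ t → y t ∈ C)
    (hodex : ∀ t, 0 ≤ t →
      x' t + x t = θ t • f (x t) + (1 - θ t) • T (x t))
    (hodey : ∀ t, 0 ≤ t →
      y' t + y t = projC (θ t • f (y t) + (1 - θ t) • T (y t) + h t)) :
    (∀ t, 0 ≤ t → ∀ v' : ℝ,
      HasDerivAt (fun s => ‖x s - y s‖ ^ 2) v' t →
        v' + 2 * (1 - α) * θ t * ‖x t - y t‖ ^ 2 ≤
          2 * ‖h t‖ * Real.sqrt (‖x t - y t‖ ^ 2)) ∧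
    (∀ t, 0 ≤ t →
      Real.sqrt (‖x t - y t‖ ^ 2) ≤
        Real.exp (-((1 - α) * ∫ s in (0:ℝ)..t, θ s)) * Real.sqrt (‖x 0 - y 0‖ ^ 2) +
          Real.exp (-((1 - α) * ∫ s in (0:ℝ)..t, θ s)) *
            ∫ s in (0:ℝ)..t, Real.exp ((1 - α) * ∫ τ in (0:ℝ)..s, θ τ) * ‖h s‖) := by
  have hne := aux_proj_nonexpansive hCne hCconv projC hproj
  have hfix : ∀ w ∈ C, projC w = w := by
    intro w hw
    have h2 := (hproj w).2 w hw
    simp only [sub_self, norm_zero] at h2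
    have h3 : ‖w - projC w‖ = 0 := le_antisymm h2 (norm_nonneg _)
    exact (norm_sub_eq_zero_iff.mp h3).symm
  have hcomb : ∀ t, 0 ≤ t → ∀ z ∈ C, θ t • f z + (1 - θ t) • T z ∈ C := fun t ht z hz =>
    hCconv (hfC hz) (hTC hz) (hθ t ht).1.le (by linarith [(hθ t ht).2]) (by ring)
  -- key derivative formula and differential inequality
  have key : ∀ t, 0 ≤ t →
      HasDerivAt (fun s => ‖x s - y s‖ ^ 2) (2 * ⟪x' t - y' t, x t - y t⟫) t ∧
      2 * ⟪x' t - y' t, x t - y t⟫ + 2 * (1 - α) * θ t * ‖x t - y t‖ ^ 2 ≤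
        2 * ‖h t‖ * ‖x t - y t‖ := by
    intro t ht
    have hu' : HasDerivAt (fun s => x s - y s) (x' t - y' t) t := (hx' t ht).sub (hy' t ht)
    constructor
    · have hinner := HasDerivAt.inner ℝ hu' hu'
      have heq : (fun s => ‖x s - y s‖ ^ 2) = fun s => ⟪x s - y s, x s - y s⟫ := by
        funext s; rw [real_inner_self_eq_norm_sq]
      rw [heq]
      refine hinner.congr_deriv ?_
      rw [real_inner_comm]; ring
    · have hx'eq : x' t = (θ t • f (x t) + (1 - θ t) • T (x t)) - x t :=
        eq_sub_of_add_eq (hodex t ht)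
      have hy'eq : y' t = projC (θ t • f (y t) + (1 - θ t) • T (y t) + h t) - y t :=
        eq_sub_of_add_eq (hodey t ht)
      set wx := θ t • f (x t) + (1 - θ t) • T (x t) with hwx
      set wy := θ t • f (y t) + (1 - θ t) • T (y t) with hwy
      have hWx : wx ∈ C := hcomb t ht _ (hxC t ht)
      have hPfix : projC wx = wx := hfix _ hWx
      have hnorm1 : ‖wx - projC (wy + h t)‖ ≤ ‖wx - wy‖ + ‖h t‖ := by
        calc ‖wx - projC (wy + h t)‖ = ‖projC wx - projC (wy + h t)‖ := by rw [hPfix]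
          _ ≤ ‖wx - (wy + h t)‖ := hne _ _
          _ = ‖(wx - wy) - h t‖ := by rw [sub_add_eq_sub_sub]
          _ ≤ ‖wx - wy‖ + ‖h t‖ := norm_sub_le _ _
      have hnorm2 : ‖wx - wy‖ ≤ (1 - (1 - α) * θ t) * ‖x t - y t‖ := by
        have hsplit : wx - wy = θ t • (f (x t) - f (y t)) + (1 - θ t) • (T (x t) - T (y t)) := by
          rw [hwx, hwy, smul_sub, smul_sub]; abel
        rw [hsplit]
        have e1 : ‖θ t • (f (x t) - f (y t))‖ = θ t * ‖f (x t) - f (y t)‖ := by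
          rw [norm_smul, Real.norm_of_nonneg (hθ t ht).1.le]
        have e2 : ‖(1 - θ t) • (T (x t) - T (y t))‖ = (1 - θ t) * ‖T (x t) - T (y t)‖ := by
          rw [norm_smul, Real.norm_of_nonneg (by linarith [(hθ t ht).2])]
        calc ‖θ t • (f (x t) - f (y t)) + (1 - θ t) • (T (x t) - T (y t))‖
            ≤ ‖θ t • (f (x t) - f (y t))‖ + ‖(1 - θ t) • (T (x t) - T (y t))‖ := norm_add_le _ _
          _ = θ t * ‖f (x t) - f (y t)‖ + (1 - θ t) * ‖T (x t) - T (y t)‖ := by rw [e1, e2]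
          _ ≤ θ t * (α * ‖x t - y t‖) + (1 - θ t) * ‖x t - y t‖ := by
              apply add_le_add
              · exact mul_le_mul_of_nonneg_left (hf _ (hxC t ht) _ (hyC t ht)) (hθ t ht).1.le
              · exact mul_le_mul_of_nonneg_left (hT _ (hxC t ht) _ (hyC t ht))
                  (by linarith [(hθ t ht).2])
          _ = (1 - (1 - α) * θ t) * ‖x t - y t‖ := by ring
      have hderiv : x' t - y' t = (wx - projC (wy + h t)) - (x t - y t) := by
        rw [hx'eq, hy'eq]; abel
      rw [hderiv, inner_sub_left, real_inner_self_eq_norm_sq]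
      have hcs : ⟪wx - projC (wy + h t), x t - y t⟫ ≤
          ‖wx - projC (wy + h t)‖ * ‖x t - y t‖ := real_inner_le_norm _ _
      nlinarith [norm_nonneg (x t - y t),
        mul_le_mul_of_nonneg_right hnorm1 (norm_nonneg (x t - y t)),
        mul_le_mul_of_nonneg_right hnorm2 (norm_nonneg (x t - y t))]
  constructor
  · intro t ht v' hv'
    obtain ⟨hd, hb⟩ := key t ht
    rw [hv'.unique hd, Real.sqrt_sq (norm_nonneg _)]
    exact hb
  · intro t ht
    rw [Real.sqrt_sq (norm_nonneg _), Real.sqrt_sq (norm_nonneg _)]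
    have hΘd : ∀ s : ℝ, HasDerivAt (fun r => ∫ τ in (0:ℝ)..r, θ τ) (θ s) s :=
      fun s => (hθc.integral_hasStrictDerivAt 0 s).hasDerivAt
    set Θ : ℝ → ℝ := fun r => ∫ τ in (0:ℝ)..r, θ τ with hΘdef
    have hΘc : Continuous Θ := continuous_iff_continuousAt.2 fun s => (hΘd s).continuousAt
    have hEc : Continuous fun s => Real.exp ((1 - α) * Θ s) :=
      Real.continuous_exp.comp (continuous_const.mul hΘc)
    have hEpos : ∀ s, 0 < Real.exp ((1 - α) * Θ s) := fun s => Real.exp_pos _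
    -- the ε-perturbed bound
    have main : ∀ ε : ℝ, 0 < ε → ‖x t - y t‖ ≤
        Real.exp (-((1 - α) * Θ t)) *
          ((‖x 0 - y 0‖ + ε) +
            ∫ s in (0:ℝ)..t, Real.exp ((1 - α) * Θ s) * (‖h s‖ + ε)) := by
      intro ε hε
      have hgc : Continuous fun s => Real.exp ((1 - α) * Θ s) * (‖h s‖ + ε) :=
        hEc.mul (hhc.norm.add continuous_const)
      set c : ℝ := ‖x 0 - y 0‖ + ε with hc
      set g : ℝ → ℝ := fun s => Real.exp ((1 - α) * Θ s) * (‖h s‖ + ε) with hgdef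
      set G : ℝ → ℝ := fun r => ∫ s in (0:ℝ)..r, g s with hGdef
      have hGd : ∀ s, HasDerivAt G (g s) s :=
        fun s => (hgc.integral_hasStrictDerivAt 0 s).hasDerivAt
      set ψ : ℝ → ℝ := fun s => Real.exp (-((1 - α) * Θ s)) * (c + G s) with hψdef
      have hψd : ∀ s, HasDerivAt ψ (-((1 - α) * θ s) * ψ s + (‖h s‖ + ε)) s := by
        intro s
        have h1 : HasDerivAt (fun r => Real.exp (-((1 - α) * Θ r)))
            (Real.exp (-((1 - α) * Θ s)) * -((1 - α) * θ s)) s :=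
          (((hΘd s).const_mul (1 - α)).neg).exp
        have h2 := h1.mul ((hGd s).const_add c)
        have e0 : Real.exp (-((1 - α) * Θ s)) * g s = ‖h s‖ + ε := by
          rw [hgdef]
          show Real.exp (-((1 - α) * Θ s)) * (Real.exp ((1 - α) * Θ s) * (‖h s‖ + ε)) = _
          rw [← mul_assoc, ← Real.exp_add]
          simp
        refine h2.congr_deriv ?_
        symm
        rw [hψdef]
        show -((1 - α) * θ s) * (Real.exp (-((1 - α) * Θ s)) * (c + G s)) + (‖h s‖ + ε) = _
        rw [← e0]; ring
      have hGnonneg : ∀ s, 0 ≤ s → 0 ≤ G s := by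
        intro s hs
        apply intervalIntegral.integral_nonneg hs
        intro τ _
        have : 0 ≤ ‖h τ‖ + ε := by positivity
        positivity
      have hψpos : ∀ s, 0 ≤ s → 0 < ψ s := by
        intro s hs
        have h1 : 0 < c := by rw [hc]; positivity
        have h2 := hGnonneg s hs
        rw [hψdef]
        show 0 < Real.exp (-((1 - α) * Θ s)) * (c + G s)
        positivity
      -- Gronwall comparison
      have hcont : ContinuousOn (fun s => ‖x s - y s‖ ^ 2) (Set.Icc 0 t) :=
        fun s hs => ((key s hs.1).1.continuousAt).continuousWithinAt
      have hder : ∀ s ∈ Set.Ico (0:ℝ) t, HasDerivWithinAt (fun s => ‖x s - y s‖ ^ 2)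
          (2 * ⟪x' s - y' s, x s - y s⟫) (Set.Ici s) s :=
        fun s hs => ((key s hs.1).1).hasDerivWithinAt
      have hψ0 : ψ 0 = c := by
        rw [hψdef]
        show Real.exp (-((1 - α) * Θ 0)) * (c + G 0) = c
        rw [hΘdef, hGdef]
        show Real.exp (-((1 - α) * ∫ τ in (0:ℝ)..(0:ℝ), θ τ)) *
          (c + ∫ s in (0:ℝ)..(0:ℝ), g s) = c
        rw [intervalIntegral.integral_same, intervalIntegral.integral_same]
        simp
      have hinit : ‖x 0 - y 0‖ ^ 2 ≤ ψ 0 ^ 2 := by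
        rw [hψ0, hc]
        nlinarith [norm_nonneg (x 0 - y 0)]
      have hBd : ∀ s : ℝ, HasDerivAt (fun r => ψ r ^ 2)
          (2 * ψ s * (-((1 - α) * θ s) * ψ s + (‖h s‖ + ε))) s := by
        intro s
        have h2 := (hψd s).pow 2
        refine h2.congr_deriv ?_
        push_cast
        ring
      have hbound : ∀ s ∈ Set.Ico (0:ℝ) t, ‖x s - y s‖ ^ 2 = ψ s ^ 2 →
          2 * ⟪x' s - y' s, x s - y s⟫ <
            2 * ψ s * (-((1 - α) * θ s) * ψ s + (‖h s‖ + ε)) := by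
        intro s hs hfB
        have hψp := hψpos s hs.1
        have hus : ‖x s - y s‖ = ψ s := by
          rw [← Real.sqrt_sq (norm_nonneg (x s - y s)), hfB, Real.sqrt_sq hψp.le]
        have hb := (key s hs.1).2
        rw [hus] at hb
        nlinarith [mul_pos hε hψp]
      have hcomp : ∀ s ∈ Set.Icc (0:ℝ) t, ‖x s - y s‖ ^ 2 ≤ ψ s ^ 2 :=
        fun s hs => image_le_of_deriv_right_lt_deriv_boundary hcont hder hinit hBd hbound hs
      have hend := hcomp t ⟨ht, le_refl t⟩
      have h1 : ‖x t - y t‖ ≤ ψ t := by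
        have := hψpos t ht
        nlinarith [norm_nonneg (x t - y t)]
      exact h1
    -- let ε → 0
    have hIc : Continuous fun s => Real.exp ((1 - α) * Θ s) * ‖h s‖ := hEc.mul hhc.norm
    set Ih : ℝ := ∫ s in (0:ℝ)..t, Real.exp ((1 - α) * Θ s) * ‖h s‖ with hIh
    set IE : ℝ := ∫ s in (0:ℝ)..t, Real.exp ((1 - α) * Θ s) with hIE
    have hIEnn : 0 ≤ IE := by
      rw [hIE]
      apply intervalIntegral.integral_nonneg ht
      intro τ _
      positivity
    set K : ℝ := Real.exp (-((1 - α) * Θ t)) * (1 + IE) with hK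
    have hKnn : 0 ≤ K := by rw [hK]; positivity
    have hsplit : ∀ ε : ℝ,
        (∫ s in (0:ℝ)..t, Real.exp ((1 - α) * Θ s) * (‖h s‖ + ε)) = Ih + ε * IE := by
      intro ε
      have e1 : (∫ s in (0:ℝ)..t, Real.exp ((1 - α) * Θ s) * (‖h s‖ + ε)) =
          ∫ s in (0:ℝ)..t, (Real.exp ((1 - α) * Θ s) * ‖h s‖ + ε * Real.exp ((1 - α) * Θ s)) := by
        apply intervalIntegral.integral_congr
        intro s _
        ring
      have hc2 : Continuous fun s => ε * Real.exp ((1 - α) * Θ s) := continuous_const.mul hEc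
      rw [e1, intervalIntegral.integral_add (hIc.intervalIntegrable _ _)
        (hc2.intervalIntegrable _ _),
        intervalIntegral.integral_const_mul]
    refine le_of_forall_pos_le_add ?_
    intro ε hε
    have hKpos : (0:ℝ) < K + 1 := by linarith
    have hm := main (ε / (K + 1)) (by positivity)
    rw [hsplit] at hm
    have heq : Real.exp (-((1 - α) * Θ t)) * ((‖x 0 - y 0‖ + ε / (K + 1)) +
        (Ih + ε / (K + 1) * IE)) =
        (Real.exp (-((1 - α) * Θ t)) * ‖x 0 - y 0‖ + Real.exp (-((1 - α) * Θ t)) * Ih)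
          + (ε / (K + 1)) * K := by
      rw [hK]; ring
    rw [heq] at hm
    have hfrac : (ε / (K + 1)) * K ≤ ε := by
      rw [div_mul_eq_mul_div, div_le_iff₀ hKpos]
      nlinarith
    linarith
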